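/- Let κ be infinite and S the lattice of balanced triples in F(κ)³ with C \ m(A,B,C) finite. No complement of (κ,∅,∅) in S belongs to B = {(A,A∩C,C) : A,C ∈ F(κ), A Δ C finite}. Consequently, B is not the range of any Banaschewski function on S. -/
import Mathlib


open Set

/-- `m(X,Y,Z) = (X∩Y) ∪ (X∩Z) ∪ (Y∩Z)`. -/
def mSet {κ : Type*} (X Y Z : Set κ) : Set κ := (X ∩ Y) ∪ (X ∩ Z) ∪ (Y ∩ Z)

/-- The finite/cofinite algebra on `κ`. -/
def FinCofin (κ : Type*) : Set (Set κ) := {X | X.Finite ∨ Xᶜ.Finite}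

/-- A triple of sets is balanced if its pairwise intersections coincide. -/
def BalancedT {κ : Type*} (t : Set κ × Set κ × Set κ) : Prop :=
  t.1 ∩ t.2.1 = t.1 ∩ t.2.2 ∧ t.1 ∩ t.2.2 = t.2.1 ∩ t.2.2

/-- The set `T` of triples from `F(κ)³` with `C \ m(A,B,C)` finite. -/
def Tset (κ : Type*) : Set (Set κ × Set κ × Set κ) :=
  {t | t.1 ∈ FinCofin κ ∧ t.2.1 ∈ FinCofin κ ∧ t.2.2 ∈ FinCofin κ ∧
    (t.2.2 \ mSet t.1 t.2.1 t.2.2).Finite}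

/-- The lattice `S` of balanced triples in `T`. -/
def Sset (κ : Type*) : Set (Set κ × Set κ × Set κ) :=
  {t | BalancedT t ∧ t ∈ Tset κ}

/-- Componentwise meet (intersection) of triples. -/
def meetT {κ : Type*} (t u : Set κ × Set κ × Set κ) : Set κ × Set κ × Set κ :=
  (t.1 ∩ u.1, t.2.1 ∩ u.2.1, t.2.2 ∩ u.2.2)

/-- The balanced closure of a triple of sets. -/
def clT {κ : Type*} (t : Set κ × Set κ × Set κ) : Set κ × Set κ × Set κ :=
  (t.1 ∪ (t.2.1 ∩ t.2.2), t.2.1 ∪ (t.1 ∩ t.2.2), t.2.2 ∪ (t.1 ∩ t.2.1))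

/-- Join of balanced triples: balanced closure of the componentwise union. -/
def joinT {κ : Type*} (t u : Set κ × Set κ × Set κ) : Set κ × Set κ × Set κ :=
  clT (t.1 ∪ u.1, t.2.1 ∪ u.2.1, t.2.2 ∪ u.2.2)

/-- The Banaschewski map `f(A,B,C) = (κ\A, κ\(B∪C), κ\(A∪B∪C))`. -/
def fT {κ : Type*} (t : Set κ × Set κ × Set κ) : Set κ × Set κ × Set κ :=
  (t.1ᶜ, (t.2.1 ∪ t.2.2)ᶜ, (t.1 ∪ t.2.1 ∪ t.2.2)ᶜ)

/-- The map `g(A,C) = (A, A∩C, C)`. -/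
def gT {κ : Type*} (p : Set κ × Set κ) : Set κ × Set κ × Set κ :=
  (p.1, p.1 ∩ p.2, p.2)

/-- The maximal Boolean sublattice `B = g(A)`. -/
def Bset (κ : Type*) : Set (Set κ × Set κ × Set κ) :=
  {t | ∃ A C : Set κ, A ∈ FinCofin κ ∧ C ∈ FinCofin κ ∧ (symmDiff A C).Finite ∧
    t = (A, A ∩ C, C)}


theorem stmt17 {κ : Type*} [Infinite κ] :
    (∀ t ∈ Sset κ,
      meetT ((univ, ∅, ∅) : Set κ × Set κ × Set κ) t = ((∅, ∅, ∅) : Set κ × Set κ × Set κ) →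
      joinT ((univ, ∅, ∅) : Set κ × Set κ × Set κ) t = ((univ, univ, univ) : Set κ × Set κ × Set κ) →
      t ∉ Bset κ) ∧
    ¬ ∃ f : Set κ × Set κ × Set κ → Set κ × Set κ × Set κ,
      (∀ t ∈ Sset κ, f t ∈ Sset κ) ∧
      (∀ t ∈ Sset κ, ∀ u ∈ Sset κ, t.1 ⊆ u.1 → t.2.1 ⊆ u.2.1 → t.2.2 ⊆ u.2.2 →
        (f u).1 ⊆ (f t).1 ∧ (f u).2.1 ⊆ (f t).2.1 ∧ (f u).2.2 ⊆ (f t).2.2) ∧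
      (∀ t ∈ Sset κ, meetT t (f t) = ((∅, ∅, ∅) : Set κ × Set κ × Set κ) ∧
        joinT t (f t) = ((univ, univ, univ) : Set κ × Set κ × Set κ)) ∧
      f '' Sset κ = Bset κ := by

  have key : ∀ t ∈ Sset κ,
      meetT ((univ, ∅, ∅) : Set κ × Set κ × Set κ) t = ((∅, ∅, ∅) : Set κ × Set κ × Set κ) →
      joinT ((univ, ∅, ∅) : Set κ × Set κ × Set κ) t = ((univ, univ, univ) : Set κ × Set κ × Set κ) →
      t ∉ Bset κ := by
    rintro ⟨A, B, C⟩ ⟨hbal, hA, hB, hC, hfin⟩ hm hj hmem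
    obtain ⟨A', C', hA', hC', hsd, heq⟩ := hmem
    obtain ⟨h1, h2, h3⟩ : A = A' ∧ B = A' ∩ C' ∧ C = C' := by
      simpa [Prod.ext_iff] using heq
    subst h1; subst h3; subst h2
    have hAe : A = ∅ := by
      have := congrArg Prod.fst hm
      simpa [meetT] using this
    subst hAe
    have hCu : C = univ := by
      have := congrArg (fun p => p.2.1) hj
      simpa [joinT, clT] using this
    have hCfin : (C : Set κ).Finite := by
      simpa [mSet] using hfin
    rw [hCu] at hCfin
    exact Set.infinite_univ hCfin
  refine ⟨key, ?_⟩
  rintro ⟨f, hfS, -, hcomp, hrange⟩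
  have heS : ((univ, ∅, ∅) : Set κ × Set κ × Set κ) ∈ Sset κ := by
    refine ⟨⟨by simp, by simp⟩, Or.inr (by simp), Or.inl (by simp), Or.inl (by simp), ?_⟩
    simp [mSet]
  have h1 := key _ (hfS _ heS) (hcomp _ heS).1 (hcomp _ heS).2
  exact h1 (hrange ▸ Set.mem_image_of_mem f heS)
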